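/- Let A0, A1, C0, C1 be smooth real functions on an open connected set U ⊆ ℝ² satisfying A0_y = A1_x, 12A1_x + 3A0·A1 − 4C1 = 0, and 32C0_y + 12A0_x·A1 − 16C1_x + 3A0²·A1 − 4A0·C1 = 0 on U. Then ∂/∂y (8C0 − 3A0² − 12A0_x) = 0 on U; that is, the right-hand side of the Riccati equation 40χ' − 20χ² = 8C0 − 3A0² − 12A0_x arising in the linearization of the first candidate equation is a function of x alone. -/

import Mathlib

open Set Topology Filter

/-- Partial derivative with respect to the first variable. -/
noncomputable def px (f : ℝ → ℝ → ℝ) : ℝ → ℝ → ℝ := fun x y => deriv (fun s => f s y) x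

/-- Partial derivative with respect to the second variable. -/
noncomputable def py (f : ℝ → ℝ → ℝ) : ℝ → ℝ → ℝ := fun x y => deriv (fun s => f x s) y

/-- Smoothness of a function of two real variables on a set. -/
def Smooth2On (f : ℝ → ℝ → ℝ) (U : Set (ℝ × ℝ)) : Prop :=
  ContDiffOn ℝ (⊤ : ℕ∞) (fun p : ℝ × ℝ => f p.1 p.2) U

private lemma hasDerivAt_slice_x (f : ℝ → ℝ → ℝ) {x y : ℝ}
    (h : DifferentiableAt ℝ (fun p : ℝ × ℝ => f p.1 p.2) (x, y)) :
    HasDerivAt (fun s => f s y)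
      (fderiv ℝ (fun p : ℝ × ℝ => f p.1 p.2) (x, y) ((1 : ℝ), (0 : ℝ))) x :=
  h.hasFDerivAt.comp_hasDerivAt (f := fun s : ℝ => ((s, y) : ℝ × ℝ)) x ((hasDerivAt_id x).prodMk (hasDerivAt_const x y))

private lemma hasDerivAt_slice_y (f : ℝ → ℝ → ℝ) {x y : ℝ}
    (h : DifferentiableAt ℝ (fun p : ℝ × ℝ => f p.1 p.2) (x, y)) :
    HasDerivAt (fun t => f x t)
      (fderiv ℝ (fun p : ℝ × ℝ => f p.1 p.2) (x, y) ((0 : ℝ), (1 : ℝ))) y :=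
  h.hasFDerivAt.comp_hasDerivAt y ((hasDerivAt_const y x).prodMk (hasDerivAt_id y))

private lemma hasDerivAt_fderiv_curve (F : ℝ × ℝ → ℝ) {p : ℝ × ℝ}
    (hF : DifferentiableAt ℝ (fderiv ℝ F) p) (w : ℝ × ℝ)
    {g : ℝ → ℝ × ℝ} {t0 : ℝ} {v : ℝ × ℝ} (hg : HasDerivAt g v t0) (hg0 : g t0 = p) :
    HasDerivAt (fun t => fderiv ℝ F (g t) w) (fderiv ℝ (fderiv ℝ F) p v w) t0 := by
  subst hg0
  have h1 : HasDerivAt (fun t => fderiv ℝ F (g t))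
      (fderiv ℝ (fderiv ℝ F) (g t0) v) t0 :=
    hF.hasFDerivAt.comp_hasDerivAt t0 hg
  have h2 := h1.clm_apply (hasDerivAt_const t0 w)
  simpa using h2

/-- under conditions (i), (iv), (v) the right-hand side
`8C0 − 3A0² − 12A0_x` of the Riccati equation is a function of `x` alone,
i.e. its `y`-derivative vanishes on `U`. -/
theorem riccati_rhs_independent_of_y
    (U : Set (ℝ × ℝ)) (hU : IsOpen U) (hUconn : IsConnected U)
    (A0 A1 C0 C1 : ℝ → ℝ → ℝ)
    (hA0 : Smooth2On A0 U) (hA1 : Smooth2On A1 U)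
    (hC0 : Smooth2On C0 U) (hC1 : Smooth2On C1 U)
    (hi : ∀ x y, (x, y) ∈ U → py A0 x y = px A1 x y)
    (hiv : ∀ x y, (x, y) ∈ U →
      12 * px A1 x y + 3 * A0 x y * A1 x y - 4 * C1 x y = 0)
    (hv : ∀ x y, (x, y) ∈ U →
      32 * py C0 x y + 12 * px A0 x y * A1 x y - 16 * px C1 x y
        + 3 * A0 x y ^ 2 * A1 x y - 4 * A0 x y * C1 x y = 0) :
    ∀ x y, (x, y) ∈ U →
      py (fun s t => 8 * C0 s t - 3 * A0 s t ^ 2 - 12 * px A0 s t) x y = 0 := by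
  intro x y hp
  have hone : (1 : WithTop ℕ∞) ≤ ((⊤ : ℕ∞) : WithTop ℕ∞) := WithTop.coe_le_coe.2 le_top
  have htwo : (2 : WithTop ℕ∞) ≤ ((⊤ : ℕ∞) : WithTop ℕ∞) := WithTop.coe_le_coe.2 le_top
  set F0 : ℝ × ℝ → ℝ := fun q => A0 q.1 q.2 with hF0def
  set F1 : ℝ × ℝ → ℝ := fun q => A1 q.1 q.2 with hF1def
  set FC0 : ℝ × ℝ → ℝ := fun q => C0 q.1 q.2 with hFC0def
  set FC1 : ℝ × ℝ → ℝ := fun q => C1 q.1 q.2 with hFC1def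
  -- differentiability everywhere on U
  have dA0 : ∀ q ∈ U, DifferentiableAt ℝ F0 q := fun q hq =>
    (hA0.contDiffAt (hU.mem_nhds hq)).differentiableAt (by simp)
  have dA1 : ∀ q ∈ U, DifferentiableAt ℝ F1 q := fun q hq =>
    (hA1.contDiffAt (hU.mem_nhds hq)).differentiableAt (by simp)
  have dC0 : ∀ q ∈ U, DifferentiableAt ℝ FC0 q := fun q hq =>
    (hC0.contDiffAt (hU.mem_nhds hq)).differentiableAt (by simp)
  have dC1 : ∀ q ∈ U, DifferentiableAt ℝ FC1 q := fun q hq =>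
    (hC1.contDiffAt (hU.mem_nhds hq)).differentiableAt (by simp)
  have cA0 : ContDiffAt ℝ (⊤ : ℕ∞) F0 (x, y) := hA0.contDiffAt (hU.mem_nhds hp)
  have cA1 : ContDiffAt ℝ (⊤ : ℕ∞) F1 (x, y) := hA1.contDiffAt (hU.mem_nhds hp)
  have dH0 : DifferentiableAt ℝ (fderiv ℝ F0) (x, y) :=
    (cA0.fderiv_right (m := 1) htwo).differentiableAt one_ne_zero
  have dH1 : DifferentiableAt ℝ (fderiv ℝ F1) (x, y) :=
    (cA1.fderiv_right (m := 1) htwo).differentiableAt one_ne_zero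
  -- eventual membership along the slices
  have hevy : ∀ᶠ t in 𝓝 y, (x, t) ∈ U :=
    (hU.preimage (continuous_const.prodMk continuous_id)).mem_nhds hp
  have hevx : ∀ᶠ s in 𝓝 x, (s, y) ∈ U :=
    (hU.preimage (continuous_id.prodMk continuous_const)).mem_nhds hp
  -- curves
  have hcy : HasDerivAt (fun t : ℝ => ((x, t) : ℝ × ℝ)) ((0 : ℝ), (1 : ℝ)) y :=
    (hasDerivAt_const y x).prodMk (hasDerivAt_id y)
  have hcx : HasDerivAt (fun s : ℝ => ((s, y) : ℝ × ℝ)) ((1 : ℝ), (0 : ℝ)) x :=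
    (hasDerivAt_id x).prodMk (hasDerivAt_const x y)
  -- second derivative quantities
  set M : ℝ := fderiv ℝ (fderiv ℝ F0) (x, y) ((0 : ℝ), (1 : ℝ)) ((1 : ℝ), (0 : ℝ)) with hM
  set M' : ℝ := fderiv ℝ (fderiv ℝ F0) (x, y) ((1 : ℝ), (0 : ℝ)) ((0 : ℝ), (1 : ℝ)) with hM'
  set N : ℝ := fderiv ℝ (fderiv ℝ F1) (x, y) ((1 : ℝ), (0 : ℝ)) ((1 : ℝ), (0 : ℝ)) with hN
  -- (1) derivative of t ↦ px A0 x t at y is M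
  have hm : HasDerivAt (fun t => px A0 x t) M y := by
    have h1 : HasDerivAt (fun t => fderiv ℝ F0 (x, t) ((1 : ℝ), (0 : ℝ))) M y :=
      hasDerivAt_fderiv_curve F0 dH0 _ hcy rfl
    refine h1.congr_of_eventuallyEq ?_
    filter_upwards [hevy] with t ht
    exact (hasDerivAt_slice_x A0 (dA0 _ ht)).deriv
  -- (2) derivative of s ↦ px A1 s y at x, two ways
  have hpxa1 : HasDerivAt (fun s => px A1 s y) M' x := by
    have h2 : HasDerivAt (fun s => fderiv ℝ F0 (s, y) ((0 : ℝ), (1 : ℝ))) M' x :=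
      hasDerivAt_fderiv_curve F0 dH0 _ hcx rfl
    refine h2.congr_of_eventuallyEq ?_
    filter_upwards [hevx] with s hs
    rw [← hi s y hs]
    exact (hasDerivAt_slice_y A0 (dA0 _ hs)).deriv
  have hpxa1' : HasDerivAt (fun s => px A1 s y) N x := by
    have h3 : HasDerivAt (fun s => fderiv ℝ F1 (s, y) ((1 : ℝ), (0 : ℝ))) N x :=
      hasDerivAt_fderiv_curve F1 dH1 _ hcx rfl
    refine h3.congr_of_eventuallyEq ?_
    filter_upwards [hevx] with s hs
    exact (hasDerivAt_slice_x A1 (dA1 _ hs)).deriv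
  have hMN : M' = N := hpxa1.unique hpxa1'
  have hsym : M = M' := (cA0.isSymmSndFDerivAt (by simpa using htwo)) _ _
  -- first derivative quantities at the point
  set a0x : ℝ := fderiv ℝ F0 (x, y) ((1 : ℝ), (0 : ℝ)) with ha0x
  set a0y : ℝ := fderiv ℝ F0 (x, y) ((0 : ℝ), (1 : ℝ)) with ha0y
  set a1x : ℝ := fderiv ℝ F1 (x, y) ((1 : ℝ), (0 : ℝ)) with ha1x
  set c0y : ℝ := fderiv ℝ FC0 (x, y) ((0 : ℝ), (1 : ℝ)) with hc0y
  set c1x : ℝ := fderiv ℝ FC1 (x, y) ((1 : ℝ), (0 : ℝ)) with hc1x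
  have hdA0x : HasDerivAt (fun s => A0 s y) a0x x := hasDerivAt_slice_x A0 (dA0 _ hp)
  have hdA0y : HasDerivAt (fun t => A0 x t) a0y y := hasDerivAt_slice_y A0 (dA0 _ hp)
  have hdA1x : HasDerivAt (fun s => A1 s y) a1x x := hasDerivAt_slice_x A1 (dA1 _ hp)
  have hdC0y : HasDerivAt (fun t => C0 x t) c0y y := hasDerivAt_slice_y C0 (dC0 _ hp)
  have hdC1x : HasDerivAt (fun s => C1 s y) c1x x := hasDerivAt_slice_x C1 (dC1 _ hp)
  have epxA0 : px A0 x y = a0x := hdA0x.deriv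
  have epyA0 : py A0 x y = a0y := hdA0y.deriv
  have epxA1 : px A1 x y = a1x := hdA1x.deriv
  have epyC0 : py C0 x y = c0y := hdC0y.deriv
  have epxC1 : px C1 x y = c1x := hdC1x.deriv
  -- pointwise equations
  have e1 : a0y = a1x := by rw [← epyA0, ← epxA1]; exact hi x y hp
  have e2 : 12 * a1x + 3 * A0 x y * A1 x y - 4 * C1 x y = 0 := by
    rw [← epxA1]; exact hiv x y hp
  have e3 : 32 * c0y + 12 * a0x * A1 x y - 16 * c1x
      + 3 * A0 x y ^ 2 * A1 x y - 4 * A0 x y * C1 x y = 0 := by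
    rw [← epyC0, ← epxA0, ← epxC1]; exact hv x y hp
  -- differentiate condition (iv) along x
  have hΦ : HasDerivAt (fun s => 12 * px A1 s y + 3 * (A0 s y * A1 s y) - 4 * C1 s y)
      (12 * N + 3 * (a0x * A1 x y + A0 x y * a1x) - 4 * c1x) x :=
    ((hpxa1'.const_mul 12).add ((hdA0x.mul hdA1x).const_mul 3)).sub (hdC1x.const_mul 4)
  have hΦ0 : HasDerivAt (fun _ : ℝ => (0 : ℝ))
      (12 * N + 3 * (a0x * A1 x y + A0 x y * a1x) - 4 * c1x) x := by
    refine hΦ.congr_of_eventuallyEq ?_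
    filter_upwards [hevx] with s hs
    have := hiv s y hs
    linarith
  have e4 : 12 * N + 3 * (a0x * A1 x y + A0 x y * a1x) - 4 * c1x = 0 :=
    ((hasDerivAt_const x (0 : ℝ)).unique hΦ0).symm
  -- compute the goal derivative
  have hG : HasDerivAt (fun t => 8 * C0 x t - 3 * A0 x t ^ 2 - 12 * px A0 x t)
      (8 * c0y - 3 * ((2 : ℕ) * A0 x y ^ 1 * a0y) - 12 * M) y :=
    ((hdC0y.const_mul 8).sub ((hdA0y.pow 2).const_mul 3)).sub (hm.const_mul 12)
  have hgoal : py (fun s t => 8 * C0 s t - 3 * A0 s t ^ 2 - 12 * px A0 s t) x y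
      = 8 * c0y - 3 * ((2 : ℕ) * A0 x y ^ 1 * a0y) - 12 * M := hG.deriv
  rw [hgoal]
  push_cast
  linear_combination (1 / 4) * e3 - e4 - (A0 x y / 4) * e2 - 6 * A0 x y * e1
    - 12 * hsym - 12 * hMN
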